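/- arXiv:1806.05703 — 4 statements merged into one kernel-verified Lean document; each statement's English description precedes it below -/
import Mathlib

section
/- Let L₁⁽¹⁾, L₁⁽²⁾, L₂⁽¹⁾, L₂⁽²⁾ be square real matrices of sizes n₁⁽¹⁾, n₁⁽²⁾, n₂⁽¹⁾, n₂⁽²⁾, let P₁ be n₁⁽²⁾×n₁⁽¹⁾ and P₂ be n₂⁽²⁾×n₂⁽¹⁾, and let α > 0. Then ‖(1/√α)(P₁⊗P₂)(L₁⁽¹⁾⊗I + I⊗L₂⁽¹⁾) − √α(L₁⁽²⁾⊗I + I⊗L₂⁽²⁾)(P₁⊗P₂)‖_F ≤ ‖(1/√α)P₁L₁⁽¹⁾ − √α L₁⁽²⁾P₁‖_F · ‖P₂‖_F + ‖P₁‖_F · ‖(1/√α)P₂L₂⁽¹⁾ − √α L₂⁽²⁾P₂‖_F. -/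
open Matrix Kronecker

noncomputable def frob {m n : Type*} [Fintype m] [Fintype n] (A : Matrix m n ℝ) : ℝ :=
  Real.sqrt ((Aᵀ * A).trace)

attribute [local instance] Matrix.frobeniusSeminormedAddCommGroup

lemma trace_transpose_mul_self (m n : Type*) [Fintype m] [Fintype n]
    (A : Matrix m n ℝ) : (Aᵀ * A).trace = ∑ j, ∑ i, A i j ^ 2 := by
  simp [Matrix.trace, Matrix.diag, Matrix.mul_apply, sq]

lemma trace_transpose_mul_self_nonneg {m n : Type*} [Fintype m] [Fintype n]
    (A : Matrix m n ℝ) : 0 ≤ (Aᵀ * A).trace := by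
  rw [trace_transpose_mul_self]
  exact Finset.sum_nonneg fun j _ => Finset.sum_nonneg fun i _ => sq_nonneg _

lemma frob_eq_norm {m n : Type*} [Fintype m] [Fintype n] (A : Matrix m n ℝ) :
    frob A = ‖A‖ := by
  rw [frob, Matrix.frobenius_norm_def, trace_transpose_mul_self, Real.sqrt_eq_rpow,
    Finset.sum_comm]
  congr 1
  refine Finset.sum_congr rfl fun i _ => Finset.sum_congr rfl fun j _ => ?_
  rw [show ((2 : ℝ)) = ((2 : ℕ) : ℝ) by norm_num, Real.rpow_natCast, Real.norm_eq_abs, sq_abs]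

lemma frob_add_le {m n : Type*} [Fintype m] [Fintype n] (A B : Matrix m n ℝ) :
    frob (A + B) ≤ frob A + frob B := by
  simp only [frob_eq_norm]; exact norm_add_le _ _

lemma frob_kronecker {l m p q : Type*} [Fintype l] [Fintype m] [Fintype p] [Fintype q]
    (A : Matrix l m ℝ) (B : Matrix p q ℝ) : frob (A ⊗ₖ B) = frob A * frob B := by
  rw [frob, frob, frob, ← Matrix.kroneckerMap_transpose, ← Matrix.mul_kronecker_mul,
    Matrix.trace_kronecker, Real.sqrt_mul (trace_transpose_mul_self_nonneg A)]

theorem stmt11 {a₁ a₂ b₁ b₂ : ℕ}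
    (L₁₁ : Matrix (Fin a₁) (Fin a₁) ℝ) (L₁₂ : Matrix (Fin a₂) (Fin a₂) ℝ)
    (L₂₁ : Matrix (Fin b₁) (Fin b₁) ℝ) (L₂₂ : Matrix (Fin b₂) (Fin b₂) ℝ)
    (P₁ : Matrix (Fin a₂) (Fin a₁) ℝ) (P₂ : Matrix (Fin b₂) (Fin b₁) ℝ)
    (α : ℝ) (hα : 0 < α) :
    frob ((1 / Real.sqrt α) •
          ((P₁ ⊗ₖ P₂) * (L₁₁ ⊗ₖ (1 : Matrix (Fin b₁) (Fin b₁) ℝ) + (1 : Matrix (Fin a₁) (Fin a₁) ℝ) ⊗ₖ L₂₁))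
        - Real.sqrt α •
          ((L₁₂ ⊗ₖ (1 : Matrix (Fin b₂) (Fin b₂) ℝ) + (1 : Matrix (Fin a₂) (Fin a₂) ℝ) ⊗ₖ L₂₂) * (P₁ ⊗ₖ P₂))) ≤
      frob ((1 / Real.sqrt α) • (P₁ * L₁₁) - Real.sqrt α • (L₁₂ * P₁)) * frob P₂ +
        frob P₁ * frob ((1 / Real.sqrt α) • (P₂ * L₂₁) - Real.sqrt α • (L₂₂ * P₂)) := by
  have key : (1 / Real.sqrt α) •
          ((P₁ ⊗ₖ P₂) * (L₁₁ ⊗ₖ (1 : Matrix (Fin b₁) (Fin b₁) ℝ) + (1 : Matrix (Fin a₁) (Fin a₁) ℝ) ⊗ₖ L₂₁))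
        - Real.sqrt α •
          ((L₁₂ ⊗ₖ (1 : Matrix (Fin b₂) (Fin b₂) ℝ) + (1 : Matrix (Fin a₂) (Fin a₂) ℝ) ⊗ₖ L₂₂) * (P₁ ⊗ₖ P₂))
      = ((1 / Real.sqrt α) • (P₁ * L₁₁) - Real.sqrt α • (L₁₂ * P₁)) ⊗ₖ P₂
        + P₁ ⊗ₖ ((1 / Real.sqrt α) • (P₂ * L₂₁) - Real.sqrt α • (L₂₂ * P₂)) := by
    simp only [Matrix.mul_add, Matrix.add_mul, ← Matrix.mul_kronecker_mul, Matrix.one_mul,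
      Matrix.mul_one, sub_eq_add_neg, ← neg_smul, Matrix.add_kronecker, Matrix.kronecker_add,
      Matrix.smul_kronecker, Matrix.kronecker_smul, smul_add]
    module
  rw [key]
  calc frob _ ≤ frob (((1 / Real.sqrt α) • (P₁ * L₁₁) - Real.sqrt α • (L₁₂ * P₁)) ⊗ₖ P₂)
      + frob (P₁ ⊗ₖ ((1 / Real.sqrt α) • (P₂ * L₂₁) - Real.sqrt α • (L₂₂ * P₂))) :=
    frob_add_le _ _
  _ = _ := by rw [frob_kronecker, frob_kronecker]
end

section
/- There exists an orthogonal-column matrix P achieving zero diffusion cost (with α = 1) between the cycle graph Cₙ and the cycle graph C₂ₙ: i.e., there is a 2n×n real matrix P with PᵀP = I and P·L(Cₙ) = L(C₂ₙ)·P. -/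
open Matrix

noncomputable def lap {V : Type*} [Fintype V] [DecidableEq V]
    (G : SimpleGraph V) [DecidableRel G.Adj] : Matrix V V ℝ :=
  G.adjMatrix ℝ - G.degMatrix ℝ

private lemma modfact (n x : ℕ) (h : x < 2 * n) :
    (x % n = x ∧ x < n) ∨ (x % n = x - n ∧ n ≤ x ∧ x - n < n) := by
  rcases Nat.lt_or_ge x n with h' | h'
  · exact Or.inl ⟨Nat.mod_eq_of_lt h', h'⟩
  · refine Or.inr ⟨?_, h', by omega⟩
    rw [Nat.mod_eq_sub_mod h', Nat.mod_eq_of_lt (by omega)]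

private lemma cycle_neighborFinset {m : ℕ} [NeZero m] (h : 3 ≤ m) (v : Fin m) :
    (SimpleGraph.cycleGraph m).neighborFinset v = {v - 1, v + 1} := by
  obtain ⟨k, rfl⟩ : ∃ k, m = k + 2 := ⟨m - 2, by omega⟩
  exact SimpleGraph.cycleGraph_neighborFinset

private lemma cycle_deg {m : ℕ} (h : 3 ≤ m) :
    (SimpleGraph.cycleGraph m).degMatrix ℝ = (2 : ℝ) • 1 := by
  obtain ⟨k, rfl⟩ : ∃ k, m = k + 3 := ⟨m - 3, by omega⟩
  ext i j
  simp [SimpleGraph.degMatrix, Matrix.diagonal, SimpleGraph.cycleGraph_degree_three_le,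
    Matrix.one_apply]

private lemma subne {m : ℕ} [NeZero m] (h3 : 3 ≤ m) (v : Fin m) : v - 1 ≠ v + 1 := by
  intro h
  have h1 : ((1 : Fin m)).val = 1 := by rw [Fin.val_one', Nat.mod_eq_of_lt (by omega)]
  have hv := v.isLt
  have := congrArg Fin.val h
  simp only [Fin.sub_def, Fin.add_def, h1] at this
  have A := modfact m (m - 1 + v.val) (by omega)
  have B := modfact m (v.val + 1) (by omega)
  omega

private def fmap (n : ℕ) (i : Fin (2 * n)) : Fin n :=
  ⟨i.val % n, by
    have := i.isLt
    rcases n with _ | m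
    · omega
    · exact Nat.mod_lt _ (Nat.succ_pos m)⟩

private lemma fmap_add_one {n : ℕ} [NeZero n] [NeZero (2 * n)] (hn : 3 ≤ n) (i : Fin (2 * n)) :
    fmap n (i + 1) = fmap n i + 1 := by
  apply Fin.ext
  have h1 : ((1 : Fin (2 * n))).val = 1 := by rw [Fin.val_one', Nat.mod_eq_of_lt (by omega)]
  have h1' : ((1 : Fin n)).val = 1 := by rw [Fin.val_one', Nat.mod_eq_of_lt (by omega)]
  have hi := i.isLt
  simp only [fmap, Fin.add_def, h1, h1']
  have B := modfact n i.val hi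
  have C := modfact n (i.val % n + 1) (by omega)
  rcases Nat.lt_or_ge (i.val + 1) (2 * n) with h | h
  · rw [Nat.mod_eq_of_lt h]
    have A := modfact n (i.val + 1) (by omega)
    omega
  · have he : i.val + 1 = 2 * n := by omega
    rw [he, Nat.mod_self, Nat.zero_mod]
    omega

private lemma fmap_sub_one {n : ℕ} [NeZero n] [NeZero (2 * n)] (hn : 3 ≤ n) (i : Fin (2 * n)) :
    fmap n (i - 1) = fmap n i - 1 := by
  apply Fin.ext
  have h1 : ((1 : Fin (2 * n))).val = 1 := by rw [Fin.val_one', Nat.mod_eq_of_lt (by omega)]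
  have h1' : ((1 : Fin n)).val = 1 := by rw [Fin.val_one', Nat.mod_eq_of_lt (by omega)]
  have hi := i.isLt
  simp only [fmap, Fin.sub_def, h1, h1']
  have B := modfact n i.val hi
  have C := modfact n (n - 1 + i.val % n) (by omega)
  rcases Nat.lt_or_ge (2 * n - 1 + i.val) (2 * n) with h | h
  · rw [Nat.mod_eq_of_lt h]
    have A := modfact n (2 * n - 1 + i.val) (by omega)
    omega
  · rw [Nat.mod_eq_sub_mod h]
    have he : 2 * n - 1 + i.val - 2 * n = i.val - 1 := by omega
    rw [he, Nat.mod_eq_of_lt (show i.val - 1 < 2 * n by omega)]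
    have A := modfact n (i.val - 1) (by omega)
    omega

private lemma adj_mul' {V W : Type*} [Fintype V] [Fintype W] [DecidableEq V]
    (G : SimpleGraph V) [DecidableRel G.Adj] (M : Matrix W V ℝ) (v : W) (w : V) :
    (M * G.adjMatrix ℝ) v w = ∑ u ∈ G.neighborFinset w, M v u := by
  simp [Matrix.mul_apply, SimpleGraph.neighborFinset_eq_filter, Finset.sum_filter,
    SimpleGraph.adj_comm]

private lemma mul_adj' {V W : Type*} [Fintype V] [Fintype W] [DecidableEq W]
    (G : SimpleGraph W) [DecidableRel G.Adj] (M : Matrix W V ℝ) (v : W) (w : V) :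
    (G.adjMatrix ℝ * M) v w = ∑ u ∈ G.neighborFinset v, M u w := by
  simp [Matrix.mul_apply, SimpleGraph.neighborFinset_eq_filter, Finset.sum_filter]

theorem stmt14 (n : ℕ) (hn : 3 ≤ n) :
    ∃ P : Matrix (Fin (2 * n)) (Fin n) ℝ,
      Pᵀ * P = 1 ∧ P * lap (SimpleGraph.cycleGraph n) = lap (SimpleGraph.cycleGraph (2 * n)) * P := by
  haveI : NeZero n := ⟨by omega⟩
  haveI : NeZero (2 * n) := ⟨by omega⟩
  have hn0 : 0 < n := by omega
  have h2n : 3 ≤ 2 * n := by omega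
  set c : ℝ := (Real.sqrt 2)⁻¹ with hc
  have hcc : c * c + c * c = 1 := by
    have h2 : Real.sqrt 2 * Real.sqrt 2 = 2 := Real.mul_self_sqrt (by norm_num)
    rw [hc, ← mul_inv, h2]
    norm_num
  refine ⟨Matrix.of fun i j => if fmap n i = j then c else 0, ?_, ?_⟩
  · ext j k
    have hfe : ∀ p : Fin 2 × Fin n, fmap n (finProdFinEquiv p) = p.2 := by
      rintro ⟨a, b⟩
      apply Fin.ext
      show ((b : ℕ) + n * (a : ℕ)) % n = (b : ℕ)
      rw [Nat.add_mul_mod_self_left, Nat.mod_eq_of_lt b.isLt]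
    have hsum : ∀ j k : Fin n,
        (∑ x : Fin n, (if x = j then c else 0) * (if x = k then c else 0))
          = if j = k then c * c else 0 := by
      intro j k
      simp only [ite_mul, zero_mul, mul_ite, mul_zero, Finset.sum_ite_eq',
        Finset.mem_univ, if_true]
      by_cases h : j = k
      · simp [h]
      · simp only [h, if_false]
        split_ifs with h2
        · exact absurd h2.symm h
        · rfl
    rw [Matrix.mul_apply, ← Equiv.sum_comp finProdFinEquiv, Fintype.sum_prod_type]
    simp only [Matrix.transpose_apply, Matrix.of_apply, hfe, Fin.sum_univ_two]
    rw [hsum j k, Matrix.one_apply]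
    split_ifs with h
    · exact hcc
    · ring
  · have hlapn : lap (SimpleGraph.cycleGraph n) =
        (SimpleGraph.cycleGraph n).adjMatrix ℝ - (2 : ℝ) • 1 := by
      rw [lap, cycle_deg hn]
    have hlap2n : lap (SimpleGraph.cycleGraph (2 * n)) =
        (SimpleGraph.cycleGraph (2 * n)).adjMatrix ℝ - (2 : ℝ) • 1 := by
      rw [lap, cycle_deg h2n]
    rw [hlapn, hlap2n, Matrix.mul_sub, Matrix.sub_mul]
    have hsm : (Matrix.of fun i j => if fmap n i = j then c else 0) *
          ((2 : ℝ) • (1 : Matrix (Fin n) (Fin n) ℝ)) =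
        ((2 : ℝ) • (1 : Matrix (Fin (2 * n)) (Fin (2 * n)) ℝ)) *
          (Matrix.of fun i j => if fmap n i = j then c else 0) := by
      rw [Matrix.mul_smul, Matrix.mul_one, Matrix.smul_mul, Matrix.one_mul]
    rw [hsm]
    congr 1
    ext i j
    rw [adj_mul', mul_adj',
      cycle_neighborFinset hn j, cycle_neighborFinset h2n i,
      Finset.sum_pair (subne hn j), Finset.sum_pair (subne h2n i)]
    simp only [Matrix.of_apply, fmap_add_one hn, fmap_sub_one hn]
    simp only [eq_sub_iff_add_eq, sub_eq_iff_eq_add]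
    exact add_comm _ _
end

section
/- For an n₂×n₁ binary matching matrix M (each column has exactly one 1 and each row at most one 1, n₁ ≤ n₂), M satisfies MᵀM = I_{n₁}; hence every minimal eigenvalue matching matrix is a feasible point of the orthogonally-constrained optimization, and the optimal value of the orthogonally-constrained problem is at most the minimal matching cost. -/
open Matrix

lemma frob_sq_eq {m n : Type*} [Fintype m] [Fintype n] (A : Matrix m n ℝ) :
    (frob A) ^ 2 = ∑ j, ∑ i, (A i j) ^ 2 := by
  have htr : (Aᵀ * A).trace = ∑ j, ∑ i, (A i j) ^ 2 := by
    simp [Matrix.trace, Matrix.mul_apply, Matrix.diag, sq]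
  rw [frob, Real.sq_sqrt, htr]
  rw [htr]
  positivity

theorem stmt17 {n₁ n₂ : ℕ}
    (M : Matrix (Fin n₂) (Fin n₁) ℝ)
    (hbin : ∀ i j, M i j = 0 ∨ M i j = 1)
    (hcol : ∀ j, ∑ i, M i j = 1)
    (hrow : ∀ i, ∑ j, M i j ≤ 1)
    (Λ₁ : Matrix (Fin n₁) (Fin n₁) ℝ) (Λ₂ : Matrix (Fin n₂) (Fin n₂) ℝ)
    (hΛ₁ : Λ₁.IsDiag) (hΛ₂ : Λ₂.IsDiag) :
    Mᵀ * M = 1 ∧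
      sInf {c : ℝ | ∃ P : Matrix (Fin n₂) (Fin n₁) ℝ, Pᵀ * P = 1 ∧
          c = (frob (P * Λ₁ - Λ₂ * P)) ^ 2} ≤
        ∑ i, ∑ j, M i j * (Λ₁ j j - Λ₂ i i) ^ 2 := by
  have hMnn : ∀ i j, 0 ≤ M i j := by
    intro i j; rcases hbin i j with h | h <;> simp [h]
  have horth : Mᵀ * M = 1 := by
    ext j k
    simp only [Matrix.mul_apply, Matrix.transpose_apply, Matrix.one_apply]
    by_cases hjk : j = k
    · subst hjk
      simp only [if_pos rfl]
      calc ∑ i, M i j * M i j = ∑ i, M i j := by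
            apply Finset.sum_congr rfl
            intro i _
            rcases hbin i j with h | h <;> simp [h]
        _ = 1 := hcol j
    · simp only [if_neg hjk]
      apply Finset.sum_eq_zero
      intro i _
      by_contra hne
      rcases hbin i j with h1 | h1
      · exact hne (by simp [h1])
      rcases hbin i k with h2 | h2
      · exact hne (by simp [h2])
      have : (2 : ℝ) ≤ ∑ l, M i l := by
        have := Finset.sum_le_sum_of_subset_of_nonneg
          (Finset.insert_subset_iff.mpr ⟨Finset.mem_univ j, Finset.singleton_subset_iff.mpr (Finset.mem_univ k)⟩)
          (fun l _ _ => hMnn i l)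
        rw [Finset.sum_insert (by simp [hjk]), Finset.sum_singleton, h1, h2] at this
        linarith
      linarith [hrow i]
  refine ⟨horth, ?_⟩
  have hentry : ∀ i j, (M * Λ₁ - Λ₂ * M) i j = M i j * (Λ₁ j j - Λ₂ i i) := by
    intro i j
    have h1 : (M * Λ₁) i j = M i j * Λ₁ j j := by
      rw [Matrix.mul_apply]
      rw [Finset.sum_eq_single j]
      · intro k _ hk; rw [hΛ₁ (fun h => hk h), mul_zero]
      · intro h; exact absurd (Finset.mem_univ j) h
    have h2 : (Λ₂ * M) i j = Λ₂ i i * M i j := by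
      rw [Matrix.mul_apply]
      rw [Finset.sum_eq_single i]
      · intro k _ hk; rw [hΛ₂ (fun h => hk h.symm), zero_mul]
      · intro h; exact absurd (Finset.mem_univ i) h
    simp [Matrix.sub_apply, h1, h2]; ring
  have hval : (frob (M * Λ₁ - Λ₂ * M)) ^ 2 = ∑ i, ∑ j, M i j * (Λ₁ j j - Λ₂ i i) ^ 2 := by
    rw [frob_sq_eq, Finset.sum_comm]
    apply Finset.sum_congr rfl
    intro i _
    apply Finset.sum_congr rfl
    intro j _
    rw [hentry]
    rcases hbin i j with h | h <;> simp [h]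
  rw [← hval]
  apply csInf_le
  · refine ⟨0, ?_⟩
    rintro c ⟨P, hP, rfl⟩
    positivity
  · exact ⟨M, horth, rfl⟩
end

section
/- If every eigenvalue of the real symmetric matrix L₁ (n₁×n₁, counted with multiplicity) appears among the eigenvalues of the real symmetric matrix L₂ (n₂×n₂, n₁ ≤ n₂), then there exists a real n₂×n₁ matrix P with PᵀP = I such that P·L₁ = L₂·P. -/
open Matrix

theorem stmt19 {n₁ n₂ : ℕ}
    (L₁ : Matrix (Fin n₁) (Fin n₁) ℝ) (L₂ : Matrix (Fin n₂) (Fin n₂) ℝ)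
    (h₁ : L₁.IsHermitian) (h₂ : L₂.IsHermitian)
    (f : Fin n₁ ↪ Fin n₂)
    (hf : ∀ i, h₂.eigenvalues (f i) = h₁.eigenvalues i) :
    ∃ P : Matrix (Fin n₂) (Fin n₁) ℝ, Pᵀ * P = 1 ∧ P * L₁ = L₂ * P := by
  set U₁ : Matrix (Fin n₁) (Fin n₁) ℝ := (h₁.eigenvectorUnitary : Matrix (Fin n₁) (Fin n₁) ℝ) with hU₁
  set U₂ : Matrix (Fin n₂) (Fin n₂) ℝ := (h₂.eigenvectorUnitary : Matrix (Fin n₂) (Fin n₂) ℝ) with hU₂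
  have hu₁ : U₁ᵀ * U₁ = 1 := by
    have := (Matrix.mem_unitaryGroup_iff').mp h₁.eigenvectorUnitary.2
    simpa [star_eq_conjTranspose, conjTranspose_eq_transpose_of_trivial] using this
  have hu₁' : U₁ * U₁ᵀ = 1 := by
    have := (Matrix.mem_unitaryGroup_iff).mp h₁.eigenvectorUnitary.2
    simpa [star_eq_conjTranspose, conjTranspose_eq_transpose_of_trivial] using this
  have hu₂ : U₂ᵀ * U₂ = 1 := by
    have := (Matrix.mem_unitaryGroup_iff').mp h₂.eigenvectorUnitary.2
    simpa [star_eq_conjTranspose, conjTranspose_eq_transpose_of_trivial] using this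
  set E : Matrix (Fin n₂) (Fin n₁) ℝ := Matrix.of (fun i j => if i = f j then 1 else 0) with hE
  set D₁ : Matrix (Fin n₁) (Fin n₁) ℝ := Matrix.diagonal h₁.eigenvalues with hD₁
  set D₂ : Matrix (Fin n₂) (Fin n₂) ℝ := Matrix.diagonal h₂.eigenvalues with hD₂
  have hL₁ : L₁ = U₁ * D₁ * U₁ᵀ := by
    have := h₁.spectral_theorem
    simpa [hU₁, hD₁, star_eq_conjTranspose, conjTranspose_eq_transpose_of_trivial, Function.comp] using this
  have hL₂ : L₂ = U₂ * D₂ * U₂ᵀ := by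
    have := h₂.spectral_theorem
    simpa [hU₂, hD₂, star_eq_conjTranspose, conjTranspose_eq_transpose_of_trivial, Function.comp] using this
  have hEE : Eᵀ * E = 1 := by
    ext j k
    simp only [Matrix.mul_apply, Matrix.transpose_apply, hE, Matrix.of_apply]
    rcases eq_or_ne j k with rfl | hjk
    · simp [Finset.sum_ite_eq, Matrix.one_apply]
    · have : ∀ i, (if i = f j then (1:ℝ) else 0) * (if i = f k then 1 else 0) = 0 := by
        intro i
        rcases eq_or_ne i (f j) with rfl | h
        · rw [if_neg (f.injective.ne hjk), mul_zero]
        · rw [if_neg h, zero_mul]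
      simp [this, Matrix.one_apply, hjk]
  have hED : E * D₁ = D₂ * E := by
    ext i j
    simp only [hE, hD₁, hD₂, Matrix.mul_apply, Matrix.of_apply, Matrix.diagonal_apply]
    rcases eq_or_ne i (f j) with rfl | h
    · simp [hf j]
    · simp [h]
  refine ⟨U₂ * E * U₁ᵀ, ?_, ?_⟩
  · calc (U₂ * E * U₁ᵀ)ᵀ * (U₂ * E * U₁ᵀ)
        = U₁ * (Eᵀ * (U₂ᵀ * U₂) * E) * U₁ᵀ := by
          simp [Matrix.transpose_mul, Matrix.mul_assoc]
      _ = 1 := by rw [hu₂]; simp [hEE, hu₁']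
  · rw [hL₁, hL₂]
    calc U₂ * E * U₁ᵀ * (U₁ * D₁ * U₁ᵀ)
        = U₂ * (E * ((U₁ᵀ * U₁) * D₁)) * U₁ᵀ := by simp [Matrix.mul_assoc]
      _ = U₂ * (D₂ * E) * U₁ᵀ := by rw [hu₁, one_mul, hED]
      _ = U₂ * D₂ * U₂ᵀ * (U₂ * E * U₁ᵀ) := by
          rw [show U₂ * D₂ * U₂ᵀ * (U₂ * E * U₁ᵀ) = U₂ * (D₂ * ((U₂ᵀ * U₂) * E)) * U₁ᵀ by
            simp [Matrix.mul_assoc], hu₂, Matrix.one_mul]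
end
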